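/- arXiv:1804.02797 — 2 statements merged into one kernel-verified Lean document; each statement's English description precedes it below -/
import Mathlib

section
/- Suppose p: [0,∞) → [0,∞) is a continuous probability density with CDF P satisfying P(0) = q ∈ [0,1), P(∞) = 1, and suppose the normalized rate-cost function satisfies s(r) = r/ι for all r ∈ (0, 1-q], where s(r) is determined by r(t) = P(t) - q and s(t) = ∫₀ᵗ x p(x) dx + t(1 + q - P(t)). Then necessarily q = 0 and p(x) = ι e^{-ιx} for x ≥ 0. -/
open Real Filter Set

/-- If the normalized rate-cost function of static caching is linear, `s(r) = r / ι`,
then necessarily the undemand probability `q` is `0` and the request-delay density is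
exponential: `p x = ι * exp (-ι x)` for `x ≥ 0`. -/
theorem linear_rate_cost_iff_exponential (p P : ℝ → ℝ) (q ι : ℝ)
    (hι : 0 < ι) (hq0 : 0 ≤ q) (hq1 : q < 1)
    (hp_cont : Continuous p)
    (hp_nonneg : ∀ x, 0 ≤ x → 0 ≤ p x)
    (hP : ∀ x, P x = q + ∫ z in (0:ℝ)..x, p z)
    (hlim : Filter.Tendsto P Filter.atTop (nhds 1))
    (hlin : ∀ t, 0 ≤ t →
      (∫ z in (0:ℝ)..t, z * p z) + t * (1 + q - P t) = (P t - q) / ι) :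
    q = 0 ∧ ∀ x, 0 ≤ x → p x = ι * Real.exp (-ι * x) := by
  set F : ℝ → ℝ := fun t => ∫ z in (0:ℝ)..t, p z with hFdef
  have hFderiv : ∀ t : ℝ, HasDerivAt F (p t) t := fun t =>
    intervalIntegral.integral_hasDerivAt_right (hp_cont.intervalIntegrable 0 t)
      (hp_cont.aestronglyMeasurable.stronglyMeasurableAtFilter) hp_cont.continuousAt
  have hFcont : Continuous F := continuous_iff_continuousAt.2 fun t => (hFderiv t).continuousAt
  set G : ℝ → ℝ := fun t => ∫ z in (0:ℝ)..t, z * p z with hGdef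
  have hGderiv : ∀ t : ℝ, HasDerivAt G (t * p t) t := fun t =>
    intervalIntegral.integral_hasDerivAt_right
      ((continuous_id.mul hp_cont).intervalIntegrable 0 t)
      ((continuous_id.mul hp_cont).aestronglyMeasurable.stronglyMeasurableAtFilter)
      (continuous_id.mul hp_cont).continuousAt
  -- rewrite hlin using F
  have hlin' : ∀ t, 0 ≤ t → G t + t * (1 - F t) = F t / ι := by
    intro t ht
    have h := hlin t ht
    rw [hP t] at h
    simp only [hFdef, hGdef]
    linear_combination h
  -- derivative identity for t > 0
  have key_pos : ∀ t : ℝ, 0 < t → ι * (1 - F t) = p t := by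
    intro t ht
    have h1 : HasDerivAt (fun v => (1 : ℝ) - F v) (-(p t)) t := by
      exact (hFderiv t).const_sub 1
    have hL : HasDerivAt (fun u => G u + u * (1 - F u))
        (t * p t + ((1 : ℝ) * (1 - F t) + t * (-(p t)))) t :=
      (hGderiv t).add ((hasDerivAt_id t).mul h1)
    have hR : HasDerivAt (fun u => F u / ι) (p t / ι) t := (hFderiv t).div_const ι
    have heq : (fun u => G u + u * (1 - F u)) =ᶠ[nhds t] (fun u => F u / ι) := by
      filter_upwards [Ioi_mem_nhds ht] with u hu
      exact hlin' u (le_of_lt hu)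
    have hL' : HasDerivAt (fun u => F u / ι)
        (t * p t + ((1 : ℝ) * (1 - F t) + t * (-(p t)))) t :=
      hL.congr_of_eventuallyEq heq.symm
    have hu := hL'.unique hR
    have h2 : (1 : ℝ) - F t = p t / ι := by linear_combination hu
    rw [h2]
    field_simp
  -- extend to t = 0 by closedness
  have key : ∀ t : ℝ, 0 ≤ t → ι * (1 - F t) = p t := by
    intro t ht
    have hclosed : IsClosed {u : ℝ | ι * (1 - F u) = p u} :=
      isClosed_eq (by fun_prop) hp_cont
    have hsub : closure (Ioi (0:ℝ)) ⊆ {u : ℝ | ι * (1 - F u) = p u} :=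
      hclosed.closure_subset_iff.2 fun u hu => key_pos u hu
    rw [closure_Ioi] at hsub
    exact hsub ht
  -- solve the ODE: H t = (1 - F t) * exp (ι t) is constant on [0, ∞)
  have hFval : ∀ t : ℝ, 0 ≤ t → 1 - F t = Real.exp (-ι * t) := by
    intro t ht
    set H : ℝ → ℝ := fun u => (1 - F u) * Real.exp (ι * u) with hHdef
    have hHderiv : ∀ u : ℝ, 0 ≤ u → HasDerivAt H 0 u := by
      intro u hu
      have h1 : HasDerivAt (fun v => (1 : ℝ) - F v) (-(p u)) u := by
        exact (hFderiv u).const_sub 1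
      have h2 : HasDerivAt (fun v => Real.exp (ι * v)) (Real.exp (ι * u) * (ι * 1)) u :=
        ((hasDerivAt_id u).const_mul ι).exp
      have hprod := h1.mul h2
      have hz : -(p u) * Real.exp (ι * u) + (1 - F u) * (Real.exp (ι * u) * (ι * 1)) = 0 := by
        linear_combination Real.exp (ι * u) * (key u hu)
      rw [hz] at hprod
      exact hprod
    have hH0 : H 0 = 1 := by simp [hHdef, hFdef]
    have hHt : H t = 1 := by
      rcases eq_or_lt_of_le ht with h | h
      · rw [← h, hH0]
      · have hc := constant_of_has_deriv_right_zero
          (f := H) (a := 0) (b := t)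
          (fun u hu => ((hHderiv u hu.1).continuousAt).continuousWithinAt)
          (fun u hu => (hHderiv u hu.1).hasDerivWithinAt)
        rw [hc t ⟨ht, le_refl t⟩, hH0]
    have hexp : Real.exp (ι * t) ≠ 0 := (Real.exp_pos _).ne'
    simp only [hHdef] at hHt
    rw [neg_mul, Real.exp_neg]
    field_simp
    linear_combination hHt
  have hpval : ∀ x, 0 ≤ x → p x = ι * Real.exp (-ι * x) := by
    intro x hx
    rw [← key x hx, hFval x hx]
  refine ⟨?_, hpval⟩
  -- P tends to q + 1, so q + 1 = 1
  have h1 : Tendsto (fun t : ℝ => q + (1 - Real.exp (-ι * t))) atTop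
      (nhds (q + (1 - 0))) := by
    refine tendsto_const_nhds.add (tendsto_const_nhds.sub ?_)
    have hneg : Tendsto (fun t : ℝ => -ι * t) atTop atBot :=
      Filter.Tendsto.const_mul_atTop_of_neg (neg_lt_zero.2 hι) tendsto_id
    exact Real.tendsto_exp_atBot.comp hneg
  have heq : (fun t : ℝ => q + (1 - Real.exp (-ι * t))) =ᶠ[atTop] P := by
    filter_upwards [eventually_ge_atTop (0:ℝ)] with t ht
    have h : 1 - (∫ z in (0:ℝ)..t, p z) = Real.exp (-ι * t) := hFval t ht
    rw [hP t]
    linarith [h]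
  have hPlim : Tendsto P atTop (nhds (q + 1)) := by
    have := h1.congr' heq
    simpa using this
  have := tendsto_nhds_unique hPlim hlim
  linarith
end

section
/- For the Pareto request-delay density p(x) = ι₁ ι₂^{ι₁} / x^{ι₁+1} on [ι₂, ∞) with ι₁ > 0, ι₁ ≠ 1, and ι₂ > 0, the normalized rate-cost function is s(r) = ι₂/(1-ι₁) · (1-r)^{(ι₁-1)/ι₁} - ι₂/(1-ι₁) + ι₂ for r ∈ (0,1). For ι₁ = 1 it is s(r) = ι₂ ln(1/(1-r)) + ι₂. -/
/-- For the Pareto request-delay density `p x = ι₁ ι₂^ι₁ / x^(ι₁+1)` on `[ι₂, ∞)` with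
`ι₁ > 0`, `ι₂ > 0`, the normalized rate-cost function for `r ∈ (0,1)` is
`s(r) = ι₂/(1-ι₁) (1-r)^((ι₁-1)/ι₁) - ι₂/(1-ι₁) + ι₂` when `ι₁ ≠ 1`, and
`s(r) = ι₂ ln(1/(1-r)) + ι₂` when `ι₁ = 1`, where `t = P⁻¹(r) = ι₂ (1-r)^(-1/ι₁)`. -/
theorem pareto_rate_cost (ι₁ ι₂ r t : ℝ) (hι₁ : 0 < ι₁) (hι₂ : 0 < ι₂)
    (hr : r ∈ Set.Ioo (0:ℝ) 1) (ht : t = ι₂ * (1 - r) ^ (-(1 / ι₁))) :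
    (ι₁ ≠ 1 →
      (∫ x in (0:ℝ)..t, x * (if ι₂ ≤ x then ι₁ * ι₂ ^ ι₁ / x ^ (ι₁ + 1) else 0)) +
        (1 - r) * t
        = ι₂ / (1 - ι₁) * (1 - r) ^ ((ι₁ - 1) / ι₁) - ι₂ / (1 - ι₁) + ι₂) ∧
    (ι₁ = 1 →
      (∫ x in (0:ℝ)..t, x * (if ι₂ ≤ x then ι₁ * ι₂ ^ ι₁ / x ^ (ι₁ + 1) else 0)) +
        (1 - r) * t
        = ι₂ * Real.log (1 / (1 - r)) + ι₂) := by
  obtain ⟨hr0, hr1⟩ := hr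
  have hu : (0:ℝ) < 1 - r := by linarith
  have hu1 : 1 - r ≤ 1 := by linarith
  have hup : (0:ℝ) < (1 - r) ^ (-(1 / ι₁)) := Real.rpow_pos_of_pos hu _
  have ht0 : 0 < t := by rw [ht]; positivity
  have htι : ι₂ ≤ t := by
    rw [ht]
    nth_rewrite 1 [← mul_one ι₂]
    have h1 : (1:ℝ) ≤ (1 - r) ^ (-(1 / ι₁)) :=
      Real.one_le_rpow_of_pos_of_le_one_of_nonpos hu hu1
        (by rw [neg_nonpos]; positivity)
    nlinarith
  set f : ℝ → ℝ := fun x => x * (if ι₂ ≤ x then ι₁ * ι₂ ^ ι₁ / x ^ (ι₁ + 1) else 0) with hf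
  -- f is a.e. 0 on (0, ι₂]
  have hae : ∀ᵐ x : ℝ, x ∈ Set.uIoc (0:ℝ) ι₂ → f x = 0 := by
    have hne : ∀ᵐ x : ℝ, x ≠ ι₂ := by
      rw [MeasureTheory.ae_iff]
      simpa using MeasureTheory.measure_singleton (μ := MeasureTheory.volume) ι₂
    filter_upwards [hne] with x hx hmem
    rw [Set.uIoc_of_le hι₂.le] at hmem
    have hlt : ¬ ι₂ ≤ x := fun h => hx (le_antisymm hmem.2 h)
    simp [hf, hlt]
  -- f agrees with a nice function on [ι₂, t]
  set g : ℝ → ℝ := fun x => ι₁ * ι₂ ^ ι₁ * x ^ (-ι₁) with hg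
  have heq : Set.EqOn f g (Set.uIcc ι₂ t) := by
    intro x hx
    rw [Set.uIcc_of_le htι] at hx
    have hx0 : 0 < x := lt_of_lt_of_le hι₂ hx.1
    have hxx : x ^ (ι₁ + 1) = x ^ ι₁ * x := by
      rw [Real.rpow_add hx0, Real.rpow_one]
    simp only [hf, hg, if_pos hx.1]
    rw [hxx, Real.rpow_neg hx0.le]
    have hxp : x ^ ι₁ ≠ 0 := ne_of_gt (Real.rpow_pos_of_pos hx0 _)
    field_simp
  have hcg : ContinuousOn g (Set.uIcc ι₂ t) := by
    apply ContinuousOn.mul continuousOn_const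
    apply ContinuousOn.rpow_const continuousOn_id
    intro x hx
    rw [Set.uIcc_of_le htι] at hx
    exact Or.inl (ne_of_gt (lt_of_lt_of_le hι₂ hx.1))
  have hig : IntervalIntegrable g MeasureTheory.volume ι₂ t := hcg.intervalIntegrable
  have hif : IntervalIntegrable f MeasureTheory.volume ι₂ t :=
    hig.congr_ae <| (MeasureTheory.ae_restrict_mem measurableSet_uIoc).mono
      fun x hx => (heq (Set.uIoc_subset_uIcc hx)).symm
  have hif0 : IntervalIntegrable f MeasureTheory.volume 0 ι₂ :=
    (intervalIntegrable_const (c := (0:ℝ))).congr_ae <|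
      ((MeasureTheory.ae_restrict_mem measurableSet_uIoc).mp
        (MeasureTheory.ae_restrict_of_ae hae)).mono fun x hx => hx.symm
  have hzero : (∫ x in (0:ℝ)..ι₂, f x) = 0 := by
    rw [intervalIntegral.integral_congr_ae (g := fun _ => (0:ℝ)) hae]
    simp
  have hkey : (∫ x in (0:ℝ)..t, f x) = ∫ x in ι₂..t, g x := by
    rw [← intervalIntegral.integral_add_adjacent_intervals hif0 hif, hzero, zero_add,
      intervalIntegral.integral_congr heq]
  have h0mem : (0:ℝ) ∉ Set.uIcc ι₂ t := by
    rw [Set.uIcc_of_le htι]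
    intro h
    exact absurd h.1 (not_le.2 hι₂)
  constructor
  · intro hne1
    have h1ι : 1 - ι₁ ≠ 0 := fun h => hne1 (by linarith)
    have hι₁0 : ι₁ ≠ 0 := ne_of_gt hι₁
    have hrg : (∫ x in ι₂..t, g x)
        = ι₁ * ι₂ ^ ι₁ * ((t ^ (-ι₁ + 1) - ι₂ ^ (-ι₁ + 1)) / (-ι₁ + 1)) := by
      simp only [hg]
      rw [intervalIntegral.integral_const_mul,
        integral_rpow (Or.inr ⟨by simpa using fun h => hne1 (by linarith), h0mem⟩)]
    have hA : t ^ (-ι₁ + 1) = ι₂ ^ (-ι₁ + 1) * (1 - r) ^ ((ι₁ - 1) / ι₁) := by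
      rw [ht, Real.mul_rpow hι₂.le hup.le, ← Real.rpow_mul hu.le]
      congr 2
      field_simp
      ring
    have hB : ι₂ ^ ι₁ * ι₂ ^ (-ι₁ + 1) = ι₂ := by
      rw [← Real.rpow_add hι₂]
      simp
    have hC : (1 - r) * t = ι₂ * (1 - r) ^ ((ι₁ - 1) / ι₁) := by
      rw [ht]
      rw [show (1 - r) * (ι₂ * (1 - r) ^ (-(1 / ι₁)))
          = ι₂ * ((1 - r) ^ (1:ℝ) * (1 - r) ^ (-(1 / ι₁))) by rw [Real.rpow_one]; ring,
        ← Real.rpow_add hu]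
      congr 2
      field_simp
      ring
    rw [hkey, hrg, hA, hC]
    set A := (1 - r) ^ ((ι₁ - 1) / ι₁) with hAdef
    set b := ι₂ ^ ι₁ with hbdef
    set c := ι₂ ^ (-ι₁ + 1) with hcdef
    have hbc : ι₁ * b * ((c * A - c) / (-ι₁ + 1)) = ι₁ * ι₂ * ((A - 1) / (1 - ι₁)) := by
      rw [← hB, show (-ι₁ + 1 : ℝ) = 1 - ι₁ by ring]
      ring
    rw [hbc]
    field_simp
    ring
  · intro h1
    subst h1
    have hrg : (∫ x in ι₂..t, g x) = ι₂ * Real.log (t / ι₂) := by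
      simp only [hg, Real.rpow_one, one_mul]
      have : ∀ x ∈ Set.uIcc ι₂ t, ι₂ * x ^ (-(1:ℝ)) = ι₂ * x⁻¹ := by
        intro x hx
        rw [Real.rpow_neg_one]
      rw [intervalIntegral.integral_congr this, intervalIntegral.integral_const_mul,
        integral_inv h0mem]
    have htv : t / ι₂ = 1 / (1 - r) := by
      rw [ht]
      rw [show -(1 / (1:ℝ)) = (-1 : ℝ) by norm_num, Real.rpow_neg_one]
      field_simp
    have hC : (1 - r) * t = ι₂ := by
      rw [ht, show -(1 / (1:ℝ)) = (-1 : ℝ) by norm_num, Real.rpow_neg_one]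
      field_simp
    rw [hkey, hrg, htv, hC]
end
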